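/- arXiv:2103.01835 — 3 statements merged into one kernel-verified Lean document; each statement's English description precedes it below -/
import Mathlib

section
/- Let ℏ, z, j ∈ ℂ with ℏ ≠ 0, and set s₁ := (z + ℏ(j+1))/(2ℏ) and s₂ := (z − ℏj)/(2ℏ). Assume that none of s₁, s₂, s₁ + 1/2, s₂ + 1/2 is a nonpositive integer (i.e. of the form −m with m ∈ ℕ). Then F(z,j) · F(z+ℏ,j) = 1 / ((z + ℏ(j+1)) · (z − ℏj)) = 1/(z² + ℏz − ℏ²·j(j+1)); that is, F(z,j) solves the difference equation F(z,j)F(z+ℏ,j) = 1/(z² + ℏz − ℏ²j(j+1)) expressing that the quantum determinant of the normalized L-operator is one. -/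
open Complex

/-- The normalizing factor `F(z,j)` of the sl₂ Wilson line, built from the complex
Gamma function.  (Here the dependence on ℏ is made explicit.) -/
noncomputable def Fnorm (ℏ z j : ℂ) : ℂ :=
  (1 / (2*ℏ)) * Complex.Gamma ((z + ℏ*(j+1)) / (2*ℏ)) * Complex.Gamma ((z - ℏ*j) / (2*ℏ)) /
    (Complex.Gamma ((z + ℏ*(j+2)) / (2*ℏ)) * Complex.Gamma ((z - ℏ*j + ℏ) / (2*ℏ)))

/-- `F(z,j)` solves the quantum-determinant difference equation
`F(z,j) F(z+ℏ,j) = 1/(z² + ℏz − ℏ²j(j+1))`. -/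
theorem Fnorm_difference_equation (ℏ z j : ℂ) (hℏ : ℏ ≠ 0)
    (s₁ s₂ : ℂ)
    (hs₁ : s₁ = (z + ℏ*(j+1)) / (2*ℏ)) (hs₂ : s₂ = (z - ℏ*j) / (2*ℏ))
    (h1 : ∀ m : ℕ, s₁ ≠ -(m : ℂ)) (h2 : ∀ m : ℕ, s₂ ≠ -(m : ℂ))
    (h3 : ∀ m : ℕ, s₁ + 1/2 ≠ -(m : ℂ)) (h4 : ∀ m : ℕ, s₂ + 1/2 ≠ -(m : ℂ)) :
    Fnorm ℏ z j * Fnorm ℏ (z + ℏ) j = 1 / ((z + ℏ*(j+1)) * (z - ℏ*j)) ∧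
    Fnorm ℏ z j * Fnorm ℏ (z + ℏ) j = 1 / (z^2 + ℏ*z - ℏ^2 * (j*(j+1))) := by
  have h2ℏ : (2*ℏ) ≠ 0 := mul_ne_zero two_ne_zero hℏ
  have hg1 : Complex.Gamma s₁ ≠ 0 := Complex.Gamma_ne_zero h1
  have hg2 : Complex.Gamma s₂ ≠ 0 := Complex.Gamma_ne_zero h2
  have hg3 : Complex.Gamma (s₁+1/2) ≠ 0 := Complex.Gamma_ne_zero h3
  have hg4 : Complex.Gamma (s₂+1/2) ≠ 0 := Complex.Gamma_ne_zero h4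
  have hs₁0 : s₁ ≠ 0 := by simpa using h1 0
  have hs₂0 : s₂ ≠ 0 := by simpa using h2 0
  have ea : (z + ℏ*(j+1)) / (2*ℏ) = s₁ := hs₁.symm
  have eb : (z - ℏ*j) / (2*ℏ) = s₂ := hs₂.symm
  have ec : (z + ℏ*(j+2)) / (2*ℏ) = s₁ + 1/2 := by rw [hs₁]; field_simp; ring
  have ed : (z - ℏ*j + ℏ) / (2*ℏ) = s₂ + 1/2 := by rw [hs₂]; field_simp
  have ee : (z + ℏ + ℏ*(j+1)) / (2*ℏ) = s₁ + 1/2 := by rw [hs₁]; field_simp; ring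
  have ef : (z + ℏ - ℏ*j) / (2*ℏ) = s₂ + 1/2 := by rw [hs₂]; field_simp; ring
  have eg : (z + ℏ + ℏ*(j+2)) / (2*ℏ) = s₁ + 1 := by rw [hs₁]; field_simp; ring
  have eh : (z + ℏ - ℏ*j + ℏ) / (2*ℏ) = s₂ + 1 := by rw [hs₂]; field_simp; ring
  have G1 : Complex.Gamma (s₁+1) = s₁ * Complex.Gamma s₁ := Complex.Gamma_add_one _ hs₁0
  have G2 : Complex.Gamma (s₂+1) = s₂ * Complex.Gamma s₂ := Complex.Gamma_add_one _ hs₂0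
  have hz1 : z + ℏ*(j+1) = 2*ℏ*s₁ := by rw [hs₁]; field_simp
  have hz2 : z - ℏ*j = 2*ℏ*s₂ := by rw [hs₂]; field_simp
  have key : Fnorm ℏ z j * Fnorm ℏ (z + ℏ) j = 1 / ((z + ℏ*(j+1)) * (z - ℏ*j)) := by
    unfold Fnorm
    rw [ea, eb, ec, ed, ee, ef, eg, eh, G1, G2, hz1, hz2]
    rw [div_mul_div_comm, div_eq_div_iff (mul_ne_zero (mul_ne_zero hg3 hg4)
      (mul_ne_zero (mul_ne_zero hs₁0 hg1) (mul_ne_zero hs₂0 hg2)))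
      (mul_ne_zero (mul_ne_zero h2ℏ hs₁0) (mul_ne_zero h2ℏ hs₂0))]
    field_simp
  refine ⟨key, ?_⟩
  rw [key]
  congr 1
  ring
end

section
/- Let ℏ, z, j ∈ ℂ with ℏ ≠ 0, and set s₁ := (−z + ℏj)/(2ℏ) and s₂ := (−z − ℏ(j+1))/(2ℏ). Assume that none of s₁, s₂, s₁ + 1/2, s₂ + 1/2 is a nonpositive integer (i.e. of the form −m with m ∈ ℕ). Then the function z ↦ −F(−z,j) satisfies the same difference equation as F(z,j): (−F(−z,j)) · (−F(−(z+ℏ),j)) = 1/((z + ℏ(j+1)) · (z − ℏj)) = 1/(z² + ℏz − ℏ²·j(j+1)). Hence −F(−z,j) is an alternative non-perturbative completion of the Wilson-line normalizing factor. -/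
open Complex

/-- the alternative non-perturbative completion `−F(−z,j)` satisfies the
same difference equation as `F(z,j)`. -/
theorem neg_Fnorm_neg_difference_equation (ℏ z j : ℂ) (hℏ : ℏ ≠ 0)
    (s₁ s₂ : ℂ)
    (hs₁ : s₁ = (-z + ℏ*j) / (2*ℏ)) (hs₂ : s₂ = (-z - ℏ*(j+1)) / (2*ℏ))
    (h1 : ∀ m : ℕ, s₁ ≠ -(m : ℂ)) (h2 : ∀ m : ℕ, s₂ ≠ -(m : ℂ))
    (h3 : ∀ m : ℕ, s₁ + 1/2 ≠ -(m : ℂ)) (h4 : ∀ m : ℕ, s₂ + 1/2 ≠ -(m : ℂ)) :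
    (-(Fnorm ℏ (-z) j)) * (-(Fnorm ℏ (-(z + ℏ)) j)) = 1 / ((z + ℏ*(j+1)) * (z - ℏ*j)) ∧
    (-(Fnorm ℏ (-z) j)) * (-(Fnorm ℏ (-(z + ℏ)) j)) = 1 / (z^2 + ℏ*z - ℏ^2 * (j*(j+1))) := by
  have h2ℏ : (2:ℂ)*ℏ ≠ 0 := by
    simp [hℏ]
  have e1 : (-z + ℏ*(j+1)) / (2*ℏ) = s₁ + 1/2 := by
    rw [hs₁]; field_simp; ring
  have e2 : (-z - ℏ*j) / (2*ℏ) = s₂ + 1/2 := by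
    rw [hs₂]; field_simp; ring
  have e3 : (-z + ℏ*(j+2)) / (2*ℏ) = s₁ + 1 := by
    rw [hs₁]; field_simp; ring
  have e4 : (-z - ℏ*j + ℏ) / (2*ℏ) = s₂ + 1 := by
    rw [hs₂]; field_simp; ring
  have f1 : (-(z+ℏ) + ℏ*(j+1)) / (2*ℏ) = s₁ := by
    rw [hs₁]; field_simp; ring
  have f2 : (-(z+ℏ) - ℏ*j) / (2*ℏ) = s₂ := by
    rw [hs₂]; field_simp; ring
  have f3 : (-(z+ℏ) + ℏ*(j+2)) / (2*ℏ) = s₁ + 1/2 := by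
    rw [hs₁]; field_simp; ring
  have f4 : (-(z+ℏ) - ℏ*j + ℏ) / (2*ℏ) = s₂ + 1/2 := by
    rw [hs₂]; field_simp; ring
  have F1 : Fnorm ℏ (-z) j
      = (1 / (2*ℏ)) * Complex.Gamma (s₁ + 1/2) * Complex.Gamma (s₂ + 1/2) /
        (Complex.Gamma (s₁ + 1) * Complex.Gamma (s₂ + 1)) := by
    unfold Fnorm
    rw [e1, e2, e3, e4]
  have F2 : Fnorm ℏ (-(z+ℏ)) j
      = (1 / (2*ℏ)) * Complex.Gamma s₁ * Complex.Gamma s₂ /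
        (Complex.Gamma (s₁ + 1/2) * Complex.Gamma (s₂ + 1/2)) := by
    unfold Fnorm
    rw [f1, f2, f3, f4]
  have g1 : Complex.Gamma s₁ ≠ 0 := Complex.Gamma_ne_zero h1
  have g2 : Complex.Gamma s₂ ≠ 0 := Complex.Gamma_ne_zero h2
  have g3 : Complex.Gamma (s₁ + 1/2) ≠ 0 := Complex.Gamma_ne_zero h3
  have g4 : Complex.Gamma (s₂ + 1/2) ≠ 0 := Complex.Gamma_ne_zero h4
  have hs10 : s₁ ≠ 0 := by simpa using h1 0
  have hs20 : s₂ ≠ 0 := by simpa using h2 0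
  have hz1 : z + ℏ*(j+1) = -(2*ℏ)*s₂ := by rw [hs₂]; field_simp; ring
  have hz2 : z - ℏ*j = -(2*ℏ)*s₁ := by rw [hs₁]; field_simp; ring
  have main : (-(Fnorm ℏ (-z) j)) * (-(Fnorm ℏ (-(z + ℏ)) j))
      = 1 / ((z + ℏ*(j+1)) * (z - ℏ*j)) := by
    rw [F1, F2, Complex.Gamma_add_one _ hs10, Complex.Gamma_add_one _ hs20, hz1, hz2]
    have g3' : Complex.Gamma (1/2 + s₁) ≠ 0 := by rwa [add_comm]
    have g4' : Complex.Gamma (1/2 + s₂) ≠ 0 := by rwa [add_comm]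
    field_simp [g1, g2, g3, g4, g3', g4', hs10, hs20, hℏ]
    rw [show ((2*s₁+1)/2 : ℂ) = s₁ + 1/2 by ring, show ((2*s₂+1)/2 : ℂ) = s₂ + 1/2 by ring]
    rw [div_eq_one_iff_eq (by
      apply_rules [mul_ne_zero, g1, g2, g3, g4, hs10, hs20, hℏ, two_ne_zero])]
  refine ⟨main, main.trans ?_⟩
  congr 1
  ring
end

section
/- Let ℏ ∈ ℂ with ℏ ≠ 0, and let τ : ℂ(X) → ℂ(X) be the ℂ-algebra automorphism of the field of rational functions in one variable X over ℂ determined by X ↦ X + ℏ. Let R ∈ ℂ(X) with R ≠ 0. If f, g ∈ ℂ(X) satisfy f · τ(f) = R and g · τ(g) = R, then f = g or f = −g. In particular, the difference equation F(z)·F(z+ℏ) = 1/((z+ℏ(j+1))(z−ℏj)) has at most one rational solution up to sign. -/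
open Polynomial

private lemma taylor_fixed_const {s : ℂ} (hs : s ≠ 0) {p : ℂ[X]}
    (h : Polynomial.taylor s p = p) : ∃ c : ℂ, p = Polynomial.C c := by
  refine ⟨p.eval 0, ?_⟩
  have key : ∀ x : ℂ, p.eval (x + s) = p.eval x := by
    intro x
    conv_rhs => rw [← h]
    rw [Polynomial.taylor_eval]
  have hroot : ∀ n : ℕ, p.eval ((n : ℂ) * s) = p.eval 0 := by
    intro n
    induction n with
    | zero => simp
    | succ n ih => push_cast; rw [add_mul, one_mul, key, ih]
  have hq : p - Polynomial.C (p.eval 0) = 0 := by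
    apply Polynomial.eq_zero_of_infinite_isRoot
    apply Set.Infinite.mono (s := Set.range (fun n : ℕ => (n : ℂ) * s))
    · rintro _ ⟨n, rfl⟩
      simp [Polynomial.IsRoot, hroot n]
    · apply Set.infinite_range_of_injective
      intro a b hab
      exact_mod_cast mul_left_injective₀ hs hab
  have := sub_eq_zero.mp hq
  exact this

private lemma laurent_fixed_const {s : ℂ} (hs : s ≠ 0) {h : RatFunc ℂ}
    (hfix : RatFunc.laurent s h = h) : ∃ c : ℂ, h = RatFunc.C c := by
  rcases eq_or_ne h 0 with rfl | hh
  · exact ⟨0, by simp⟩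
  have hq0 : h.denom ≠ 0 := h.denom_ne_zero
  have hp0 : h.num ≠ 0 := RatFunc.num_ne_zero hh
  have hts : ∀ r : ℂ[X], r ≠ 0 → Polynomial.taylor s r ≠ 0 := by
    intro r hr hc
    apply hr
    have := congrArg (Polynomial.taylor (-s)) hc
    rwa [Polynomial.taylor_taylor, neg_add_cancel, Polynomial.taylor_zero',
      LinearMap.id_apply, map_zero] at this
  have hinj : Function.Injective (algebraMap ℂ[X] (RatFunc ℂ)) :=
    IsFractionRing.injective _ _
  -- cross-multiplied equation
  have heq : h.num * Polynomial.taylor s h.denom = Polynomial.taylor s h.num * h.denom := by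
    have h2 := hfix
    conv_lhs at h2 => rw [← RatFunc.num_div_denom h]
    rw [RatFunc.laurent_div] at h2
    conv_rhs at h2 => rw [← RatFunc.num_div_denom h]
    rw [div_eq_div_iff (by simpa using hts _ hq0) (by simpa using hq0)] at h2
    apply hinj
    push_cast [map_mul]
    linear_combination -h2
  have hcop : IsCoprime h.num h.denom := RatFunc.isCoprime_num_denom h
  -- denom divides taylor s denom
  have hdvd : h.denom ∣ Polynomial.taylor s h.denom := by
    apply hcop.symm.dvd_of_dvd_mul_left
    exact ⟨Polynomial.taylor s h.num, by linear_combination heq⟩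
  obtain ⟨u, hu⟩ := hdvd
  have htq0 : Polynomial.taylor s h.denom ≠ 0 := hts _ hq0
  have hu0 : u ≠ 0 := by rintro rfl; simp at hu; exact hq0 hu
  have hdegu : u.natDegree = 0 := by
    have := Polynomial.natDegree_taylor h.denom s
    rw [hu, Polynomial.natDegree_mul hq0 hu0] at this
    omega
  obtain ⟨a, rfl⟩ := Polynomial.natDegree_eq_zero.mp hdegu
  have hlc : (Polynomial.taylor s h.denom).leadingCoeff = 1 := by
    rw [Polynomial.taylor_apply, Polynomial.leadingCoeff_comp (by simp)]
    simp [h.monic_denom.leadingCoeff]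
  have ha : a = 1 := by
    rw [hu, Polynomial.leadingCoeff_mul, h.monic_denom.leadingCoeff] at hlc
    simpa using hlc
  rw [ha, map_one, mul_one] at hu
  -- denom is a fixed point of taylor, hence constant; being monic, it is 1
  obtain ⟨c2, hc2⟩ := taylor_fixed_const hs hu
  have hd1 : h.denom = 1 := by
    have := h.monic_denom
    rw [hc2] at this ⊢
    rw [Polynomial.Monic, Polynomial.leadingCoeff_C] at this
    rw [this, map_one]
  -- now num is also fixed
  have hnum : Polynomial.taylor s h.num = h.num := by
    rw [hd1] at heq
    simpa using heq.symm
  obtain ⟨c, hc⟩ := taylor_fixed_const hs hnum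
  refine ⟨c, ?_⟩
  rw [← RatFunc.num_div_denom h, hd1, hc]
  simp [RatFunc.algebraMap_C]

example : True := trivial

private lemma tau_eq_laurent (ℏ : ℂ) (τ : RatFunc ℂ ≃ₐ[ℂ] RatFunc ℂ)
    (hτ : τ RatFunc.X = RatFunc.X + RatFunc.C ℏ) (r : RatFunc ℂ) :
    τ r = RatFunc.laurent ℏ r := by
  have halg : ∀ p : ℂ[X], τ (algebraMap ℂ[X] (RatFunc ℂ) p)
      = algebraMap ℂ[X] (RatFunc ℂ) (Polynomial.taylor ℏ p) := by
    intro p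
    have h1 : ∀ q : ℂ[X], algebraMap ℂ[X] (RatFunc ℂ) q = Polynomial.aeval RatFunc.X q := by
      intro q
      rw [← RatFunc.algebraMap_X (K := ℂ), Polynomial.aeval_algebraMap_apply,
        Polynomial.aeval_X_left_apply]
    rw [h1, ← Polynomial.aeval_algHom_apply τ, hτ, h1, Polynomial.taylor_apply,
      Polynomial.aeval_comp]
    simp [RatFunc.algebraMap_eq_C]
  conv_lhs => rw [← RatFunc.num_div_denom r]
  conv_rhs => rw [← RatFunc.num_div_denom r]
  rw [map_div₀, halg, halg, RatFunc.laurent_div]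



/-- uniqueness up to sign of rational solutions of the
quantum-determinant difference equation.  `τ` is the ℂ-algebra automorphism of the
field of rational functions ℂ(X) determined by `X ↦ X + ℏ`. -/
theorem rational_solution_unique_up_to_sign (ℏ : ℂ) (hℏ : ℏ ≠ 0)
    (τ : RatFunc ℂ ≃ₐ[ℂ] RatFunc ℂ)
    (hτ : τ RatFunc.X = RatFunc.X + RatFunc.C ℏ)
    (R f g : RatFunc ℂ) (hR : R ≠ 0)
    (hf : f * τ f = R) (hg : g * τ g = R) :
    f = g ∨ f = -g := by
  have hτL := tau_eq_laurent ℏ τ hτ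
  have hg0 : g ≠ 0 := by rintro rfl; rw [zero_mul] at hg; exact hR hg.symm
  have hf0 : f ≠ 0 := by rintro rfl; rw [zero_mul] at hf; exact hR hf.symm
  have hτg0 : τ g ≠ 0 := fun hc => hg0 (by simpa using τ.injective (hc.trans (map_zero τ).symm))
  set h := f / g with hhdef
  have hmul : h * τ h = 1 := by
    rw [hhdef, map_div₀]
    rw [div_mul_div_comm, hf, hg, div_self hR]
  have hh0 : h ≠ 0 := div_ne_zero hf0 hg0
  have hτh : τ h = h⁻¹ := eq_inv_of_mul_eq_one_right hmul
  have hfix : RatFunc.laurent (ℏ + ℏ) h = h := by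
    rw [← RatFunc.laurent_laurent, ← hτL, ← hτL, hτh, map_inv₀, hτh, inv_inv]
  have hs2 : (ℏ + ℏ) ≠ 0 := by
    intro hc
    exact hℏ (by linear_combination hc / 2)
  obtain ⟨c, hc⟩ := laurent_fixed_const hs2 hfix
  have hτC : τ (RatFunc.C c) = RatFunc.C c := by
    rw [← RatFunc.algebraMap_eq_C]; exact τ.commutes c
  have hcc : RatFunc.C (c * c) = RatFunc.C 1 := by
    rw [map_one, ← hmul, hc, hτC, map_mul]
  have hc2 : c * c = 1 := by
    exact (RatFunc.C (K := ℂ)).injective hcc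
  rcases mul_self_eq_one_iff.mp hc2 with h1 | h1
  · left
    have : h = 1 := by rw [hc, h1, map_one]
    rw [hhdef] at this
    exact (div_eq_one_iff_eq hg0).mp this
  · right
    have : h = -1 := by rw [hc, h1, map_neg, map_one]
    rw [hhdef, div_eq_iff hg0] at this
    rw [this]; ring
end
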